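/- For nonnegative integers k, l and real (or rational) numbers x, y, z with x + y + z = 1, (-1)^k * sum_{j=0}^{k} binomial(k,j) * x^{k-j} * B_{l+j}(y) = (-1)^l * sum_{j=0}^{l} binomial(l,j) * x^{l-j} * B_{k+j}(z). -/

import Mathlib

open Finset

lemma my_bernoulli_eval_add (n : ℕ) (u v : ℚ) :
    (Polynomial.bernoulli n).eval (u + v) =
      ∑ j ∈ range (n + 1), (n.choose j : ℚ) * (Polynomial.bernoulli j).eval u * v ^ (n - j) := by
  simp only [Polynomial.bernoulli, Polynomial.eval_finset_sum, Polynomial.eval_monomial]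
  have L1 : ∀ i ∈ range (n + 1),
      _root_.bernoulli i * (n.choose i : ℚ) * (u + v) ^ (n - i) =
      ∑ j ∈ Ico i (n + 1), _root_.bernoulli i * (n.choose i : ℚ) *
        (u ^ (j - i) * v ^ (n - i - (j - i)) * ((n - i).choose (j - i) : ℚ)) := by
    intro i hi
    rw [mem_range] at hi
    rw [add_pow, mul_sum, sum_Ico_eq_sum_range]
    have hni : n + 1 - i = n - i + 1 := by omega
    rw [hni]
    refine sum_congr rfl fun s _ => ?_
    have h1 : i + s - i = s := by omega
    rw [h1]
  rw [sum_congr rfl L1, range_eq_Ico, sum_Ico_Ico_comm]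
  simp only [← range_eq_Ico]
  refine sum_congr rfl fun j hj => ?_
  rw [mem_range] at hj
  have hjn : j ≤ n := by omega
  rw [mul_sum, sum_mul]
  refine sum_congr rfl fun i hi => ?_
  rw [mem_range] at hi
  have hij : i ≤ j := by omega
  have he : n - i - (j - i) = n - j := by omega
  have hc : (n.choose i : ℚ) * (((n - i).choose (j - i) : ℕ) : ℚ)
      = (n.choose j : ℚ) * (j.choose i : ℚ) := by
    exact_mod_cast (Nat.choose_mul (n := n) hij).symm
  rw [he]
  linear_combination u ^ (j - i) * v ^ (n - j) * _root_.bernoulli i * hc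

lemma my_bernoulli_eval_one_sub (n : ℕ) (u : ℚ) :
    (Polynomial.bernoulli n).eval (1 - u) = (-1 : ℚ) ^ n * (Polynomial.bernoulli n).eval u := by
  have h1 : (1 : ℚ) - u = 1 + -u := by ring
  rw [h1, my_bernoulli_eval_add]
  conv_rhs => rw [show u = 0 + u by ring, my_bernoulli_eval_add]
  rw [mul_sum]
  refine sum_congr rfl fun j hj => ?_
  rw [mem_range] at hj
  have hjn : j ≤ n := by omega
  rw [Polynomial.bernoulli_eval_one, Polynomial.bernoulli_eval_zero, bernoulli'_eq_bernoulli]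
  have h2 : (-u) ^ (n - j) = (-1 : ℚ) ^ (n - j) * u ^ (n - j) := by
    rw [neg_pow]
  have h3 : (-1 : ℚ) ^ j * (-1 : ℚ) ^ (n - j) = (-1 : ℚ) ^ n := by
    rw [← pow_add]
    congr 1
    omega
  rw [h2]
  linear_combination ((n.choose j : ℚ) * _root_.bernoulli j * u ^ (n - j)) * h3

lemma comb_step (k l m : ℕ) :
    ∑ j ∈ range (l + 2), (-1 : ℚ) ^ j * (l + 1).choose j * (k + j).choose m
      = ∑ j ∈ range (l + 1), (-1 : ℚ) ^ j * l.choose j * (k + j).choose m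
        - ∑ j ∈ range (l + 1), (-1 : ℚ) ^ j * l.choose j * (k + 1 + j).choose m := by
  rw [sum_range_succ' (fun j => (-1 : ℚ) ^ j * (l + 1).choose j * (k + j).choose m) (l + 1)]
  have hg : ∀ j ∈ range (l + 1),
      (-1 : ℚ) ^ (j + 1) * (l + 1).choose (j + 1) * (k + (j + 1)).choose m
      = -((-1 : ℚ) ^ j * l.choose j * (k + 1 + j).choose m)
        - (-1 : ℚ) ^ j * l.choose (j + 1) * (k + 1 + j).choose m := by
    intro j _
    rw [Nat.choose_succ_succ, show k + (j + 1) = k + 1 + j by omega]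
    push_cast
    ring
  rw [sum_congr rfl hg, sum_sub_distrib, sum_neg_distrib]
  have hT : ∑ j ∈ range (l + 1), (-1 : ℚ) ^ j * l.choose (j + 1) * (k + 1 + j).choose m
      = ∑ j ∈ range l, (-1 : ℚ) ^ j * l.choose (j + 1) * (k + 1 + j).choose m := by
    rw [sum_range_succ, Nat.choose_succ_self]
    simp
  have hB : ∑ j ∈ range (l + 1), (-1 : ℚ) ^ j * l.choose j * (k + j).choose m
      = ∑ j ∈ range l, (-1 : ℚ) ^ (j + 1) * l.choose (j + 1) * (k + (j + 1)).choose m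
        + (-1 : ℚ) ^ 0 * l.choose 0 * (k + 0).choose m := by
    exact sum_range_succ' _ l
  have hBT : ∀ j ∈ range l, (-1 : ℚ) ^ (j + 1) * l.choose (j + 1) * (k + (j + 1)).choose m
      = -((-1 : ℚ) ^ j * l.choose (j + 1) * (k + 1 + j).choose m) := by
    intro j _
    rw [show k + (j + 1) = k + 1 + j by omega]
    ring
  rw [hT, hB, sum_congr rfl hBT, sum_neg_distrib]
  simp only [pow_zero, Nat.choose_zero_right, Nat.cast_one, add_zero, one_mul]
  ring

lemma comb_identity : ∀ l k m : ℕ,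
    ∑ j ∈ range (l + 1), (-1 : ℚ) ^ j * l.choose j * (k + j).choose m
      = (-1 : ℚ) ^ l * (if l ≤ m then (k.choose (m - l) : ℚ) else 0) := by
  intro l
  induction l with
  | zero => intro k m; simp
  | succ l ih =>
    intro k m
    rw [show l + 1 + 1 = l + 2 by omega, comb_step, ih k m, ih (k + 1) m]
    by_cases hlm : l ≤ m
    · by_cases hlm' : l + 1 ≤ m
      · simp only [hlm, hlm', if_true]
        have hp : (k + 1).choose (m - l) = k.choose (m - l - 1) + k.choose (m - l) := by
          have h1 : m - l = (m - (l + 1)) + 1 := by omega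
          rw [h1, Nat.choose_succ_succ]
          congr 1
        have h2 : m - l - 1 = m - (l + 1) := by omega
        rw [hp] at *
        push_cast
        rw [h2]
        ring
      · have hml : m = l := by omega
        simp only [hlm, if_true, hlm', if_false]
        subst hml
        simp
    · have h1 : ¬ (l + 1 ≤ m) := by omega
      simp [hlm, h1]

theorem sun_bernoulli_poly (k l : ℕ) (x y z : ℚ) (h : x + y + z = 1) :
    (-1 : ℚ) ^ k * ∑ j ∈ range (k + 1),
        (k.choose j : ℚ) * x ^ (k - j) * (Polynomial.bernoulli (l + j)).eval y =
    (-1 : ℚ) ^ l * ∑ j ∈ range (l + 1),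
        (l.choose j : ℚ) * x ^ (l - j) * (Polynomial.bernoulli (k + j)).eval z := by
  have hz : z = 1 - (y + x) := by linarith
  subst hz
  -- Step 1: rewrite each Bernoulli value on the RHS
  have step1 : ∀ j ∈ range (l + 1),
      (l.choose j : ℚ) * x ^ (l - j) * (Polynomial.bernoulli (k + j)).eval (1 - (y + x))
      = ∑ i ∈ range (k + l + 1), (l.choose j : ℚ) * x ^ (l - j) * ((-1 : ℚ) ^ (k + j) *
          ((k + j).choose i * (Polynomial.bernoulli i).eval y * x ^ (k + j - i))) := by
    intro j hj
    rw [mem_range] at hj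
    rw [my_bernoulli_eval_one_sub, my_bernoulli_eval_add]
    rw [mul_sum, mul_sum]
    refine sum_subset (range_subset_range.mpr (by omega : k + j + 1 ≤ k + l + 1)) ?_
    intro i hi hni
    rw [mem_range] at hi
    simp only [mem_range, not_lt] at hni
    rw [Nat.choose_eq_zero_of_lt (by omega : k + j < i)]
    simp
  rw [sum_congr rfl step1, sum_comm]
  -- Step 2: evaluate the inner sum over j for each i
  have step2 : ∀ i ∈ range (k + l + 1),
      ∑ j ∈ range (l + 1), (l.choose j : ℚ) * x ^ (l - j) * ((-1 : ℚ) ^ (k + j) *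
          ((k + j).choose i * (Polynomial.bernoulli i).eval y * x ^ (k + j - i)))
      = (-1 : ℚ) ^ k * (Polynomial.bernoulli i).eval y * x ^ (k + l - i) *
          ((-1 : ℚ) ^ l * (if l ≤ i then (k.choose (i - l) : ℚ) else 0)) := by
    intro i _
    rw [← comb_identity l k i, mul_sum]
    refine sum_congr rfl fun j hj => ?_
    rw [mem_range] at hj
    rcases le_or_gt i (k + j) with hik | hik
    · have hx : x ^ (l - j) * x ^ (k + j - i) = x ^ (k + l - i) := by
        rw [← pow_add]
        congr 1
        omega
      rw [pow_add (-1 : ℚ) k j]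
      linear_combination ((l.choose j : ℚ) * (-1 : ℚ) ^ k * (-1 : ℚ) ^ j *
        ((k + j).choose i : ℚ) * (Polynomial.bernoulli i).eval y) * hx
    · rw [Nat.choose_eq_zero_of_lt hik]
      simp
  rw [sum_congr rfl step2]
  -- Step 3: clean up signs and collapse the `if`
  have step3 : ∑ i ∈ range (k + l + 1),
      (-1 : ℚ) ^ k * (Polynomial.bernoulli i).eval y * x ^ (k + l - i) *
        ((-1 : ℚ) ^ l * (if l ≤ i then (k.choose (i - l) : ℚ) else 0))
      = (-1 : ℚ) ^ l * ((-1 : ℚ) ^ k *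
        ∑ i ∈ range (k + l + 1), (if l ≤ i then
          (k.choose (i - l) : ℚ) * x ^ (k - (i - l)) * (Polynomial.bernoulli i).eval y else 0)) := by
    rw [mul_sum, mul_sum]
    refine sum_congr rfl fun i hi => ?_
    rw [mem_range] at hi
    by_cases hli : l ≤ i
    · simp only [hli, if_true]
      have hx : k + l - i = k - (i - l) := by omega
      rw [hx]
      ring
    · simp [hli]
  have step4 : ∑ i ∈ range (k + l + 1), (if l ≤ i then
        (k.choose (i - l) : ℚ) * x ^ (k - (i - l)) * (Polynomial.bernoulli i).eval y else 0)
      = ∑ j ∈ range (k + 1),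
        (k.choose j : ℚ) * x ^ (k - j) * (Polynomial.bernoulli (l + j)).eval y := by
    rw [← sum_filter]
    have hset : filter (fun i => l ≤ i) (range (k + l + 1)) = Ico l (l + (k + 1)) := by
      ext i
      simp only [mem_filter, mem_range, mem_Ico]
      omega
    rw [hset, sum_Ico_eq_sum_range]
    have hkl : l + (k + 1) - l = k + 1 := by omega
    rw [hkl]
    refine sum_congr rfl fun j hj => ?_
    have h1 : l + j - l = j := by omega
    rw [h1]
  rw [step3, step4, ← mul_assoc, ← pow_add, ← two_mul, pow_mul]
  norm_num
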